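/- Let P ≥ 1 be an integer and let h⁰ ∈ ℓ^∞(ℤ) satisfy h⁰_{j+P} = h⁰_j for all j ∈ ℤ. Let h : [0,∞) → ℓ^∞(ℤ) be the unique bounded C¹ solution of the discrete heat equation with h(0)=h⁰, and let h̄ = (1/P) Σ_{j=0}^{P−1} h⁰_j. Then lim_{t→∞} sup_{j∈ℤ} |h_j(t) − h̄| = 0. -/

import Mathlib

open Filter Topology Set

noncomputable section

/-- Right-hand side of the discrete heat equation on `ℤ`. -/
def heatRHS (h : ℤ → ℝ) (j : ℤ) : ℝ := h (j + 1) + h (j - 1) - 2 * h j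

lemma shift_sum (P : ℕ) (F : ℤ → ℝ) (hF : ∀ j : ℤ, F (j + (P : ℤ)) = F j) :
    ∑ k ∈ Finset.range P, F ((k : ℤ) + 1) = ∑ k ∈ Finset.range P, F (k : ℤ) := by
  have h1 := Finset.sum_range_succ' (fun k : ℕ => F (k : ℤ)) P
  have h2 := Finset.sum_range_succ (fun k : ℕ => F (k : ℤ)) P
  have h3 : F ((P : ℕ) : ℤ) = F 0 := by simpa using hF 0
  have h4 : ∀ k : ℕ, F (((k + 1 : ℕ) : ℤ)) = F ((k : ℤ) + 1) := by intro k; push_cast; ring_nf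
  simp only [h4] at h1
  -- h1 : ∑ range (P+1) = ∑ range P, F (k+1) + F 0
  -- h2 : ∑ range (P+1) = ∑ range P, F k + F P
  rw [h2, h3] at h1
  norm_num at h1
  linarith

lemma periodic_mul (P : ℕ) (F : ℤ → ℝ) (hF : ∀ j : ℤ, F (j + (P : ℤ)) = F j) :
    ∀ (q : ℤ) (j : ℤ), F (j + (P : ℤ) * q) = F j := by
  intro q
  induction q using Int.induction_on with
  | zero => simp
  | succ i ih =>
      intro j
      have : j + (P : ℤ) * ((i : ℤ) + 1) = (j + (P:ℤ) * i) + (P:ℤ) := by ring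
      rw [this, hF, ih]
  | pred i ih =>
      intro j
      have : j + (P : ℤ) * (-(i : ℤ) - 1) + (P:ℤ) = j + (P:ℤ) * (-(i:ℤ)) := by ring
      have h2 := hF (j + (P : ℤ) * (-(i : ℤ) - 1))
      rw [this] at h2
      rw [← h2, ih]

lemma periodic_reduce (P : ℕ) (hP : 0 < P) (F : ℤ → ℝ) (hF : ∀ j : ℤ, F (j + (P : ℤ)) = F j) :
    ∀ j : ℤ, ∃ k : ℕ, k < P ∧ F j = F (k : ℤ) := by
  intro j
  have hP' : (0:ℤ) < (P:ℤ) := by exact_mod_cast hP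
  refine ⟨(j % (P:ℤ)).toNat, ?_, ?_⟩
  · have h1 : j % (P:ℤ) < (P:ℤ) := Int.emod_lt_of_pos j hP'
    have h2 : 0 ≤ j % (P:ℤ) := Int.emod_nonneg j (by omega)
    omega
  · have h2 : 0 ≤ j % (P:ℤ) := Int.emod_nonneg j (by omega)
    have : ((j % (P:ℤ)).toNat : ℤ) = j % (P:ℤ) := Int.toNat_of_nonneg h2
    rw [this]
    have hj : j = j % (P:ℤ) + (P:ℤ) * (j / (P:ℤ)) := by
      have := Int.mul_ediv_add_emod j (P:ℤ); linarith
    conv_lhs => rw [hj]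
    exact periodic_mul P F hF _ _

lemma tele_sum (P : ℕ) (v : ℤ → ℝ) (hv : ∀ j : ℤ, v (j + (P : ℤ)) = v j) :
    ∑ k ∈ Finset.range P, heatRHS v (k : ℤ) = 0 := by
  have key : ∀ F : ℤ → ℝ, (∀ j : ℤ, F (j + (P:ℤ)) = F j) →
      ∑ k ∈ Finset.range P, (F ((k:ℤ)+1) - F (k:ℤ)) = 0 := by
    intro F hF
    rw [Finset.sum_sub_distrib, shift_sum P F hF, sub_self]
  have hG := key (fun j => v j - v (j-1)) (by
    intro j
    have h' : j + (P:ℤ) - 1 = (j-1) + (P:ℤ) := by ring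
    rw [hv, h', hv])
  have hh : ∀ k : ℤ, heatRHS v k = ((fun j => v j - v (j-1)) (k+1) - (fun j => v j - v (j-1)) k) := by
    intro k; simp only [heatRHS]
    have h' : k + 1 - 1 = k := by ring
    rw [h']; ring
  calc ∑ k ∈ Finset.range P, heatRHS v (k:ℤ)
      = ∑ k ∈ Finset.range P, ((fun j => v j - v (j-1)) ((k:ℤ)+1) - (fun j => v j - v (j-1)) (k:ℤ)) :=
        Finset.sum_congr rfl fun k _ => hh k
    _ = 0 := hG

lemma parts_sum (P : ℕ) (v : ℤ → ℝ) (hv : ∀ j : ℤ, v (j + (P : ℤ)) = v j) :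
    ∑ k ∈ Finset.range P, v (k:ℤ) * heatRHS v (k:ℤ)
      = - ∑ k ∈ Finset.range P, (v ((k:ℤ)+1) - v (k:ℤ))^2 := by
  have key : ∀ F : ℤ → ℝ, (∀ j : ℤ, F (j + (P:ℤ)) = F j) →
      ∑ k ∈ Finset.range P, (F ((k:ℤ)+1) - F (k:ℤ)) = 0 := by
    intro F hF
    rw [Finset.sum_sub_distrib, shift_sum P F hF, sub_self]
  have h1 := key (fun j => v j * v (j-1)) (by
    intro j
    have h' : j + (P:ℤ) - 1 = (j-1) + (P:ℤ) := by ring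
    rw [hv, h', hv])
  have h2 := key (fun j => v j ^ 2) (by intro j; simp [hv])
  have expand : ∀ k : ℤ, v k * heatRHS v k + (v (k+1) - v k)^2
      = -((fun j => v j * v (j-1)) (k+1) - (fun j => v j * v (j-1)) k)
        + ((fun j => v j ^2) (k+1) - (fun j => v j ^2) k) := by
    intro k; simp only [heatRHS]
    have : k + 1 - 1 = k := by ring
    rw [this]; ring
  have : ∑ k ∈ Finset.range P, (v (k:ℤ) * heatRHS v (k:ℤ) + (v ((k:ℤ)+1) - v (k:ℤ))^2) = 0 := by
    calc ∑ k ∈ Finset.range P, (v (k:ℤ) * heatRHS v (k:ℤ) + (v ((k:ℤ)+1) - v (k:ℤ))^2)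
        = ∑ k ∈ Finset.range P, (-((fun j => v j * v (j-1)) ((k:ℤ)+1) - (fun j => v j * v (j-1)) (k:ℤ))
            + ((fun j => v j ^2) ((k:ℤ)+1) - (fun j => v j ^2) (k:ℤ))) :=
          Finset.sum_congr rfl fun k _ => expand k
      _ = 0 := by rw [Finset.sum_add_distrib, Finset.sum_neg_distrib, h1, h2]; ring
  rw [Finset.sum_add_distrib] at this
  linarith

lemma poincare (P : ℕ) (hP : 0 < P) (v : ℤ → ℝ)
    (hm : ∑ k ∈ Finset.range P, v (k:ℤ) = 0) :
    ∑ k ∈ Finset.range P, (v (k:ℤ))^2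
      ≤ (P:ℝ)^2 * ∑ k ∈ Finset.range P, (v ((k:ℤ)+1) - v (k:ℤ))^2 := by
  set S : ℝ := ∑ i ∈ Finset.range P, |v ((i:ℤ)+1) - v (i:ℤ)| with hS
  have hrange : ∀ n : ℕ, v ((n:ℤ)) - v 0 = ∑ i ∈ Finset.range n, (v ((i:ℤ)+1) - v (i:ℤ)) := by
    intro n
    have h := Finset.sum_range_sub (fun i : ℕ => v (i:ℤ)) n
    simp only [Nat.cast_zero] at h
    rw [← h]
    apply Finset.sum_congr rfl
    intro i _
    push_cast
    ring_nf
  -- |v j - v k| ≤ S for j k < P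
  have hdiff : ∀ j k : ℕ, j < P → k < P → |v (j:ℤ) - v (k:ℤ)| ≤ S := by
    have base : ∀ j k : ℕ, j ≤ k → k < P → |v (k:ℤ) - v (j:ℤ)| ≤ S := by
      intro j k hjk hkP
      have : v (k:ℤ) - v (j:ℤ) = ∑ i ∈ Finset.Ico j k, (v ((i:ℤ)+1) - v (i:ℤ)) := by
        rw [Finset.sum_Ico_eq_sub _ hjk, ← hrange j, ← hrange k]; ring
      rw [this]
      calc |∑ i ∈ Finset.Ico j k, (v ((i:ℤ)+1) - v (i:ℤ))|
          ≤ ∑ i ∈ Finset.Ico j k, |v ((i:ℤ)+1) - v (i:ℤ)| := Finset.abs_sum_le_sum_abs _ _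
        _ ≤ S := by
            apply Finset.sum_le_sum_of_subset_of_nonneg
            · intro i hi
              simp only [Finset.mem_Ico] at hi
              simp only [Finset.mem_range]
              omega
            · intro i _ _; positivity
    intro j k hj hk
    rcases le_total j k with hle | hle
    · rw [abs_sub_comm]; exact base j k hle hk
    · exact base k j hle hj
  have habs : ∀ j : ℕ, j < P → |v (j:ℤ)| ≤ S := by
    intro j hj
    have h1 : (P:ℝ) * v (j:ℤ) = ∑ k ∈ Finset.range P, (v (j:ℤ) - v (k:ℤ)) := by
      rw [Finset.sum_sub_distrib, hm, Finset.sum_const, Finset.card_range]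
      simp
    have h2 : (P:ℝ) * |v (j:ℤ)| ≤ (P:ℝ) * S := by
      calc (P:ℝ) * |v (j:ℤ)| = |(P:ℝ) * v (j:ℤ)| := by
            rw [abs_mul, abs_of_nonneg (by positivity : (0:ℝ) ≤ (P:ℝ))]
        _ = |∑ k ∈ Finset.range P, (v (j:ℤ) - v (k:ℤ))| := by rw [h1]
        _ ≤ ∑ k ∈ Finset.range P, |v (j:ℤ) - v (k:ℤ)| := Finset.abs_sum_le_sum_abs _ _
        _ ≤ ∑ k ∈ Finset.range P, S := by
            apply Finset.sum_le_sum
            intro k hk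
            exact hdiff j k hj (Finset.mem_range.mp hk)
        _ = (P:ℝ) * S := by rw [Finset.sum_const, Finset.card_range]; simp
    have hPpos : (0:ℝ) < (P:ℝ) := by exact_mod_cast hP
    exact le_of_mul_le_mul_left h2 hPpos
  have hS2 : S^2 ≤ (P:ℝ) * ∑ k ∈ Finset.range P, (v ((k:ℤ)+1) - v (k:ℤ))^2 := by
    have := sq_sum_le_card_mul_sum_sq (s := Finset.range P)
      (f := fun i : ℕ => |v ((i:ℤ)+1) - v (i:ℤ)|)
    simp only [Finset.card_range, sq_abs] at this
    exact_mod_cast this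
  calc ∑ k ∈ Finset.range P, (v (k:ℤ))^2
      ≤ ∑ k ∈ Finset.range P, S^2 := by
        apply Finset.sum_le_sum
        intro k hk
        have h := habs k (Finset.mem_range.mp hk)
        have : |v (k:ℤ)|^2 ≤ S^2 := by
          apply pow_le_pow_left₀ (abs_nonneg _) h
        rwa [sq_abs] at this
    _ = (P:ℝ) * S^2 := by rw [Finset.sum_const, Finset.card_range]; simp
    _ ≤ (P:ℝ) * ((P:ℝ) * ∑ k ∈ Finset.range P, (v ((k:ℤ)+1) - v (k:ℤ))^2) := by
        apply mul_le_mul_of_nonneg_left hS2 (by positivity)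
    _ = (P:ℝ)^2 * ∑ k ∈ Finset.range P, (v ((k:ℤ)+1) - v (k:ℤ))^2 := by ring

lemma heat_zero_of_zero_init (B : ℝ) (d : ℝ → ℤ → ℝ)
    (hbound : ∀ t : ℝ, 0 ≤ t → ∀ j : ℤ, |d t j| ≤ B)
    (hzero : ∀ j : ℤ, d 0 j = 0)
    (hderiv : ∀ j : ℤ, ∀ t : ℝ, 0 ≤ t →
      HasDerivWithinAt (fun s => d s j) (heatRHS (d t) j) (Set.Ici (0 : ℝ)) t) :
    ∀ t : ℝ, 0 ≤ t → ∀ j : ℤ, d t j = 0 := by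
  have hcont : ∀ j : ℤ, ContinuousOn (fun s => d s j) (Ici 0) :=
    fun j t ht => (hderiv j t ht).continuousWithinAt
  have hrhs_cont : ∀ j : ℤ, ContinuousOn (fun s => heatRHS (d s) j) (Ici 0) := by
    intro j
    simp only [heatRHS]
    exact ((hcont (j+1)).add (hcont (j-1))).sub ((continuousOn_const).mul (hcont j))
  have hftc : ∀ j : ℤ, ∀ t : ℝ, 0 ≤ t →
      d t j = ∫ s in (0:ℝ)..t, heatRHS (d s) j := by
    intro j t ht
    have h := intervalIntegral.integral_eq_sub_of_hasDeriv_right_of_le ht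
      ((hcont j).mono (Icc_subset_Ici_self))
      (fun x hx => (hderiv j x hx.1.le).mono (fun y hy => le_of_lt (lt_trans hx.1 hy)))
      (((hrhs_cont j).mono (by rw [uIcc_of_le ht]; exact Icc_subset_Ici_self)).intervalIntegrable)
    rw [h, hzero j, sub_zero]
  have hB : 0 ≤ B := le_trans (abs_nonneg _) (hbound 0 le_rfl 0)
  have claim : ∀ n : ℕ, ∀ t : ℝ, 0 ≤ t → ∀ j : ℤ, |d t j| ≤ B * (4*t)^n / n.factorial := by
    intro n
    induction n with
    | zero => intro t ht j; simpa using hbound t ht j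
    | succ n ih =>
        intro t ht j
        rw [hftc j t ht]
        have hbnd : ∀ s ∈ Icc (0:ℝ) t, |heatRHS (d s) j| ≤ 4 * (B * (4*s)^n / n.factorial) := by
          intro s hs
          have h1 := ih s hs.1 (j+1)
          have h2 := ih s hs.1 (j-1)
          have h3 := ih s hs.1 j
          calc |heatRHS (d s) j| ≤ |d s (j+1)| + |d s (j-1)| + 2 * |d s j| := by
                simp only [heatRHS]
                calc |d s (j+1) + d s (j-1) - 2 * d s j|
                    ≤ |d s (j+1) + d s (j-1)| + |2 * d s j| := abs_sub _ _
                  _ ≤ |d s (j+1)| + |d s (j-1)| + 2 * |d s j| := by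
                      have := abs_add_le (d s (j+1)) (d s (j-1))
                      rw [abs_mul]
                      simp only [abs_two]
                      linarith
            _ ≤ 4 * (B * (4*s)^n / n.factorial) := by linarith
        have hint1 : IntervalIntegrable (fun s => |heatRHS (d s) j|) MeasureTheory.volume 0 t :=
          (((hrhs_cont j).mono (by rw [uIcc_of_le ht]; exact Icc_subset_Ici_self)).abs).intervalIntegrable
        have hint2 : IntervalIntegrable (fun s : ℝ => 4 * (B * (4*s)^n / n.factorial))
            MeasureTheory.volume 0 t := (Continuous.intervalIntegrable (by continuity) 0 t)
        calc |∫ s in (0:ℝ)..t, heatRHS (d s) j|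
            ≤ ∫ s in (0:ℝ)..t, |heatRHS (d s) j| :=
              intervalIntegral.abs_integral_le_integral_abs ht
          _ ≤ ∫ s in (0:ℝ)..t, 4 * (B * (4*s)^n / n.factorial) := by
              apply intervalIntegral.integral_mono_on ht hint1 hint2
              exact hbnd
          _ = B * (4*t)^(n+1) / (n+1).factorial := by
              have : ∀ s : ℝ, 4 * (B * (4*s)^n / n.factorial)
                  = (4 * B * 4^n / n.factorial) * s^n := by
                intro s; rw [mul_pow]; ring
              simp only [this]
              rw [intervalIntegral.integral_const_mul, integral_pow]
              rw [Nat.factorial_succ]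
              push_cast
              have h4 : ((n:ℝ)+1) ≠ 0 := by positivity
              have h5 : (n.factorial : ℝ) ≠ 0 := by positivity
              field_simp
              ring
  intro t ht j
  have htend : Tendsto (fun n : ℕ => B * (4*t)^n / n.factorial) atTop (nhds 0) := by
    have h1 := (FloorSemiring.tendsto_pow_div_factorial_atTop (K := ℝ) (4*t)).const_mul B
    rw [mul_zero] at h1
    convert h1 using 2 with n
    ring
  have hle : |d t j| ≤ 0 :=
    ge_of_tendsto' htend (fun n => claim n t ht j)
  exact abs_eq_zero.mp (le_antisymm hle (abs_nonneg _))

theorem periodic_discrete_heat_converges_to_average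
    (P : ℕ) (hP : 1 ≤ P) (h0 : ℤ → ℝ) (h : ℝ → ℤ → ℝ)
    (hper : ∀ j : ℤ, h0 (j + (P : ℤ)) = h0 j)
    (hbdd0 : ∃ B : ℝ, ∀ j : ℤ, |h0 j| ≤ B)
    (hinit : ∀ j : ℤ, h 0 j = h0 j)
    (hbdd : ∃ B : ℝ, ∀ t : ℝ, 0 ≤ t → ∀ j : ℤ, |h t j| ≤ B)
    (hsol : ∀ j : ℤ, ∀ t : ℝ, 0 ≤ t →
      HasDerivWithinAt (fun s => h s j) (heatRHS (h t) j) (Set.Ici (0 : ℝ)) t) :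
    ∀ ε : ℝ, 0 < ε → ∃ T : ℝ, ∀ t : ℝ, T ≤ t → ∀ j : ℤ,
      |h t j - (∑ k ∈ Finset.range P, h0 (k : ℤ)) / (P : ℝ)| ≤ ε := by
  intro ε hε
  obtain ⟨B, hB⟩ := hbdd
  have hPpos : 0 < P := hP
  have hPR : (0:ℝ) < (P:ℝ) := by exact_mod_cast hP
  set hbar : ℝ := (∑ k ∈ Finset.range P, h0 (k:ℤ)) / (P:ℝ) with hbar_def
  -- Step 1: spatial periodicity of the solution
  have hper_t : ∀ t : ℝ, 0 ≤ t → ∀ j : ℤ, h t (j + (P:ℤ)) = h t j := by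
    have key := heat_zero_of_zero_init (2*B) (fun t j => h t (j + (P:ℤ)) - h t j)
      (by
        intro t ht j
        have h1 := hB t ht (j + (P:ℤ))
        have h2 := hB t ht j
        calc |h t (j + (P:ℤ)) - h t j| ≤ |h t (j + (P:ℤ))| + |h t j| := abs_sub _ _
          _ ≤ 2*B := by linarith)
      (by intro j; simp only [hinit]; rw [hper j, sub_self])
      (by
        intro j t ht
        have hd := (hsol (j + (P:ℤ)) t ht).sub (hsol j t ht)
        have e1 : j + (P:ℤ) + 1 = j + 1 + (P:ℤ) := by ring
        have e2 : j + (P:ℤ) - 1 = j - 1 + (P:ℤ) := by ring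
        have : heatRHS (h t) (j + (P:ℤ)) - heatRHS (h t) j
            = heatRHS (fun i => h t (i + (P:ℤ)) - h t i) j := by
          simp only [heatRHS]; rw [e1, e2]; ring
        rw [this] at hd
        exact hd)
    intro t ht j
    have h2 := key t ht j
    linarith
  -- continuity
  have hcont : ∀ j : ℤ, ContinuousOn (fun s => h s j) (Ici 0) :=
    fun j t ht => (hsol j t ht).continuousWithinAt
  -- Step 2: mean conservation
  have hmean : ∀ t : ℝ, 0 ≤ t →
      ∑ k ∈ Finset.range P, h t (k:ℤ) = ∑ k ∈ Finset.range P, h0 (k:ℤ) := by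
    intro t ht
    have key := constant_of_has_deriv_right_zero
      (f := fun s => ∑ k ∈ Finset.range P, h s (k:ℤ)) (a := 0) (b := t)
      (ContinuousOn.mono (continuousOn_finset_sum _ (fun k _ => hcont (k:ℤ)))
        Icc_subset_Ici_self)
      (by
        intro x hx
        have hx0 : (0:ℝ) ≤ x := hx.1
        have hsum : HasDerivWithinAt (fun s => ∑ k ∈ Finset.range P, h s (k:ℤ))
            (∑ k ∈ Finset.range P, heatRHS (h x) (k:ℤ)) (Ici x) x :=
          HasDerivWithinAt.fun_sum (fun k _ =>
            (hsol (k:ℤ) x hx0).mono (Ici_subset_Ici.mpr hx0))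
        rwa [tele_sum P (h x) (hper_t x hx0)] at hsum)
      t (by exact ⟨ht, le_rfl⟩)
    rw [key]
    exact Finset.sum_congr rfl fun k _ => hinit (k:ℤ)
  -- mean zero of shifted solution
  have hmean0 : ∀ t : ℝ, 0 ≤ t →
      ∑ k ∈ Finset.range P, (h t (k:ℤ) - hbar) = 0 := by
    intro t ht
    rw [Finset.sum_sub_distrib, hmean t ht, Finset.sum_const, Finset.card_range,
      nsmul_eq_mul, hbar_def]
    field_simp
    ring
  -- Energy and dissipation
  set E : ℝ → ℝ := fun s => ∑ k ∈ Finset.range P, (h s (k:ℤ) - hbar)^2 with hE_def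
  set D : ℝ → ℝ := fun s => ∑ k ∈ Finset.range P, (h s ((k:ℤ)+1) - h s (k:ℤ))^2 with hD_def
  have hD_nonneg : ∀ s, 0 ≤ D s := fun s => Finset.sum_nonneg fun k _ => sq_nonneg _
  have hE_nonneg : ∀ s, 0 ≤ E s := fun s => Finset.sum_nonneg fun k _ => sq_nonneg _
  have hE' : ∀ t : ℝ, 0 ≤ t → HasDerivWithinAt E (-2 * D t) (Ici 0) t := by
    intro t ht
    have hterm : ∀ k ∈ Finset.range P, HasDerivWithinAt
        (fun s => (h s (k:ℤ) - hbar)^2)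
        (2 * (h t (k:ℤ) - hbar) * heatRHS (h t) (k:ℤ)) (Ici 0) t := by
      intro k _
      have h1 := ((hsol (k:ℤ) t ht).sub_const hbar).fun_pow 2
      simp only [Nat.cast_ofNat, pow_one] at h1
      norm_num at h1
      exact h1
    have hsum := HasDerivWithinAt.fun_sum hterm
    have hval : ∑ k ∈ Finset.range P, 2 * (h t (k:ℤ) - hbar) * heatRHS (h t) (k:ℤ)
        = -2 * D t := by
      have hvper : ∀ j : ℤ, (h t (j + (P:ℤ)) - hbar) = (h t j - hbar) := by
        intro j; rw [hper_t t ht j]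
      have hparts := parts_sum P (fun j => h t j - hbar) hvper
      have hrhseq : ∀ k : ℤ, heatRHS (fun j => h t j - hbar) k = heatRHS (h t) k := by
        intro k; simp only [heatRHS]; ring
      simp only [hrhseq] at hparts
      calc ∑ k ∈ Finset.range P, 2 * (h t (k:ℤ) - hbar) * heatRHS (h t) (k:ℤ)
          = 2 * ∑ k ∈ Finset.range P, (h t (k:ℤ) - hbar) * heatRHS (h t) (k:ℤ) := by
            rw [Finset.mul_sum]; exact Finset.sum_congr rfl fun k _ => by ring
        _ = 2 * (- ∑ k ∈ Finset.range P, ((h t ((k:ℤ)+1) - hbar) - (h t (k:ℤ) - hbar))^2) := by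
            rw [hparts]
        _ = 2 * (- D t) := by
            simp only [hD_def]
            congr 2
            exact Finset.sum_congr rfl fun k _ => by ring
        _ = -2 * D t := by ring
    rwa [hval] at hsum
  -- Poincare inequality
  have hpoin : ∀ t : ℝ, 0 ≤ t → E t ≤ (P:ℝ)^2 * D t := by
    intro t ht
    have := poincare P hPpos (fun j => h t j - hbar) (hmean0 t ht)
    calc E t = ∑ k ∈ Finset.range P, (h t (k:ℤ) - hbar)^2 := rfl
      _ ≤ (P:ℝ)^2 * ∑ k ∈ Finset.range P, ((h t ((k:ℤ)+1) - hbar) - (h t (k:ℤ) - hbar))^2 := this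
      _ = (P:ℝ)^2 * D t := by
          rw [hD_def]
          congr 1
          exact Finset.sum_congr rfl fun k _ => by ring
  -- exponential decay via a Lyapunov function
  set c : ℝ := 2 / (P:ℝ)^2 with hc_def
  have hc : 0 < c := by positivity
  set G : ℝ → ℝ := fun s => E s * Real.exp (c * s) with hG_def
  have hG_anti : AntitoneOn G (Ici 0) := by
    apply antitoneOn_of_deriv_nonpos (convex_Ici 0)
    · exact ContinuousOn.mul (fun t ht => (hE' t ht).continuousWithinAt)
        (Real.continuous_exp.comp (continuous_const.mul continuous_id)).continuousOn
    · rw [interior_Ici]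
      intro x hx
      have hEx : HasDerivAt E (-2 * D x) x :=
        (hE' x (le_of_lt hx)).hasDerivAt (Ici_mem_nhds hx)
      have hexp : HasDerivAt (fun s : ℝ => Real.exp (c * s)) (Real.exp (c * x) * c) x := by
        simpa using ((hasDerivAt_id x).const_mul c).exp
      exact (hEx.mul hexp).differentiableAt.differentiableWithinAt
    · rw [interior_Ici]
      intro x hx
      have hEx : HasDerivAt E (-2 * D x) x :=
        (hE' x (le_of_lt hx)).hasDerivAt (Ici_mem_nhds hx)
      have hexp : HasDerivAt (fun s : ℝ => Real.exp (c * s)) (Real.exp (c * x) * c) x := by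
        simpa using ((hasDerivAt_id x).const_mul c).exp
      have hGd : HasDerivAt G (-2 * D x * Real.exp (c * x) + E x * (Real.exp (c * x) * c)) x :=
        hEx.mul hexp
      rw [hGd.deriv]
      have h1 : c * E x ≤ 2 * D x := by
        have h2 := hpoin x (le_of_lt hx)
        rw [hc_def]
        rw [div_mul_eq_mul_div, div_le_iff₀ (by positivity)]
        calc 2 * E x ≤ 2 * ((P:ℝ)^2 * D x) := by linarith
          _ = 2 * D x * (P:ℝ)^2 := by ring
      have hexp_pos : 0 < Real.exp (c * x) := Real.exp_pos _
      nlinarith [hexp_pos, h1]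
  have hdecay : ∀ t : ℝ, 0 ≤ t → E t ≤ E 0 * Real.exp (-(c * t)) := by
    intro t ht
    have h1 : G t ≤ G 0 := hG_anti (mem_Ici.mpr le_rfl) (mem_Ici.mpr ht) ht
    simp only [hG_def, mul_zero, Real.exp_zero, mul_one] at h1
    have h2 : E t = E t * Real.exp (c * t) * Real.exp (-(c * t)) := by
      rw [mul_assoc, ← Real.exp_add]
      simp
    rw [h2]
    exact mul_le_mul_of_nonneg_right h1 (Real.exp_nonneg _)
  -- choose the time threshold
  have htend : Tendsto (fun t : ℝ => E 0 * Real.exp (-(c * t))) atTop (nhds 0) := by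
    have h1 : Tendsto (fun t : ℝ => c * t) atTop atTop :=
      Tendsto.const_mul_atTop hc tendsto_id
    have h2 : Tendsto (fun t : ℝ => -(c * t)) atTop atBot :=
      tendsto_neg_atTop_atBot.comp h1
    have h3 : Tendsto (fun t : ℝ => Real.exp (-(c * t))) atTop (nhds 0) :=
      Real.tendsto_exp_atBot.comp h2
    simpa using h3.const_mul (E 0)
  have hev : ∀ᶠ t in atTop, E 0 * Real.exp (-(c * t)) < ε ^ 2 :=
    htend.eventually (gt_mem_nhds (by positivity))
  obtain ⟨T', hT'⟩ := eventually_atTop.mp hev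
  refine ⟨max T' 0, ?_⟩
  intro t htT j
  have ht0 : (0:ℝ) ≤ t := le_trans (le_max_right _ _) htT
  obtain ⟨k, hkP, hk⟩ := periodic_reduce P hPpos (h t) (hper_t t ht0) j
  have hterm : (h t (k:ℤ) - hbar) ^ 2 ≤ E t := by
    simp only [hE_def]
    exact Finset.single_le_sum (f := fun i : ℕ => (h t (i:ℤ) - hbar)^2)
      (fun i _ => sq_nonneg _) (Finset.mem_range.mpr hkP)
  have hlt : E t < ε ^ 2 :=
    lt_of_le_of_lt (hdecay t ht0) (hT' t (le_trans (le_max_left _ _) htT))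
  have hsq : (h t j - hbar) ^ 2 < ε ^ 2 := by
    rw [hk]
    exact lt_of_le_of_lt hterm hlt
  have h4 := Real.sqrt_le_sqrt hsq.le
  rwa [Real.sqrt_sq_eq_abs, Real.sqrt_sq hε.le] at h4
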